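/- Let a > 0 and define Q_a : (−1,1) → ℝ by Q_a(v) := (√(1 − v²)·(e^a − 1)/(v a))·ln((1 − e^{−a√(1 − v²)})/(1 − e^{−a√((1 − v)/(1 + v))})) for v ≠ 0 and Q_a(0) := 1. Then Q_a is differentiable at v = 0 with derivative Q_a′(0) = (e^a(a − 2) + 2)/(2(e^a − 1)). In particular Q_a′(0) = 0 if and only if e^a(a − 2) + 2 = 0. -/

import Mathlib

open Real

/-- The quotient `Q_a(v)` of the transition rates of a detector moving with velocity `v`,
respectively at rest, in the NESS with the left reservoir in the vacuum state. -/
noncomputable def Qfun (a v : ℝ) : ℝ :=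
  if v = 0 then 1
  else (Real.sqrt (1 - v ^ 2) * (Real.exp a - 1) / (v * a)) *
    Real.log ((1 - Real.exp (-(a * Real.sqrt (1 - v ^ 2)))) /
      (1 - Real.exp (-(a * Real.sqrt ((1 - v) / (1 + v))))))

/- Auxiliary definitions -/
noncomputable def pf (v : ℝ) : ℝ := Real.sqrt (1 - v ^ 2)
noncomputable def sf (v : ℝ) : ℝ := Real.sqrt ((1 - v) / (1 + v))
noncomputable def hf (a x : ℝ) : ℝ := Real.log (1 - Real.exp (-(a * x)))
noncomputable def hd (a x : ℝ) : ℝ := a * Real.exp (-(a * x)) / (1 - Real.exp (-(a * x)))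
noncomputable def hdd (a x : ℝ) : ℝ :=
  -(a ^ 2) * Real.exp (-(a * x)) / (1 - Real.exp (-(a * x))) ^ 2
noncomputable def pd (v : ℝ) : ℝ := -v / pf v
noncomputable def sd (v : ℝ) : ℝ := -1 / ((1 + v) ^ 2 * sf v)
noncomputable def Ff (a v : ℝ) : ℝ :=
  ((Real.exp a - 1) / a) * (pf v * (hf a (pf v) - hf a (sf v)))
noncomputable def Fd (a v : ℝ) : ℝ :=
  ((Real.exp a - 1) / a) *
    (pd v * (hf a (pf v) - hf a (sf v)) +
      pf v * (hd a (pf v) * pd v - hd a (sf v) * sd v))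

lemma one_sub_exp_pos {a x : ℝ} (ha : 0 < a) (hx : 0 < x) :
    0 < 1 - Real.exp (-(a * x)) := by
  have : Real.exp (-(a * x)) < 1 := Real.exp_lt_one_iff.mpr (by nlinarith)
  linarith

lemma pf_pos {v : ℝ} (h : 0 < 1 - v ^ 2) : 0 < pf v := Real.sqrt_pos.mpr h

lemma sf_pos {v : ℝ} (h1 : -1 < v) (h2 : v < 1) : 0 < sf v :=
  Real.sqrt_pos.mpr (div_pos (by linarith) (by linarith))

lemma hasDerivAt_pf {v : ℝ} (h : 0 < 1 - v ^ 2) : HasDerivAt pf (pd v) v := by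
  have h1 : HasDerivAt (fun v : ℝ => 1 - v ^ 2) (-(2 * v)) v := by
    simpa using ((hasDerivAt_pow 2 v).const_sub 1)
  have h2 := h1.sqrt (ne_of_gt h)
  refine HasDerivAt.congr_deriv (h2) ?_
  symm
  have hp : Real.sqrt (1 - v ^ 2) ≠ 0 := ne_of_gt (pf_pos h)
  unfold pd pf
  field_simp

lemma hasDerivAt_sf {v : ℝ} (h1 : -1 < v) (h2 : v < 1) : HasDerivAt sf (sd v) v := by
  have h1v : (0:ℝ) < 1 + v := by linarith
  have hr : HasDerivAt (fun v : ℝ => (1 - v) / (1 + v)) (-2 / (1 + v) ^ 2) v := by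
    have hnum : HasDerivAt (fun v : ℝ => 1 - v) (-1) v := by
      simpa using (hasDerivAt_id v).const_sub 1
    have hden : HasDerivAt (fun v : ℝ => 1 + v) 1 v := by
      simpa using (hasDerivAt_id v).const_add 1
    have := hnum.div hden (ne_of_gt h1v)
    refine HasDerivAt.congr_deriv (this) ?_
    symm
    field_simp
    ring
  have hrpos : 0 < (1 - v) / (1 + v) := div_pos (by linarith) h1v
  have h3 := hr.sqrt (ne_of_gt hrpos)
  refine HasDerivAt.congr_deriv (h3) ?_
  symm
  have hS : 0 < Real.sqrt ((1 - v) / (1 + v)) := sf_pos h1 h2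
  unfold sd sf
  rw [div_div, div_eq_div_iff (ne_of_gt (mul_pos (pow_pos h1v 2) hS))
    (ne_of_gt (mul_pos (pow_pos h1v 2) (mul_pos two_pos hS)))]
  ring

lemma hasDerivAt_inner {a x : ℝ} :
    HasDerivAt (fun x : ℝ => 1 - Real.exp (-(a * x))) (a * Real.exp (-(a * x))) x := by
  have h1 : HasDerivAt (fun x : ℝ => -(a * x)) (-a) x := by
    simpa using (((hasDerivAt_id x).const_mul a).fun_neg)
  have h2 := h1.exp
  have h3 := h2.const_sub 1
  refine HasDerivAt.congr_deriv (h3) ?_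
  symm
  ring

lemma hasDerivAt_hf {a x : ℝ} (h : 0 < 1 - Real.exp (-(a * x))) :
    HasDerivAt (hf a) (hd a x) x := by
  have := (hasDerivAt_inner (a := a) (x := x)).log (ne_of_gt h)
  exact this

lemma hasDerivAt_hd {a x : ℝ} (h : 0 < 1 - Real.exp (-(a * x))) :
    HasDerivAt (hd a) (hdd a x) x := by
  have hnum : HasDerivAt (fun x : ℝ => a * Real.exp (-(a * x)))
      (a * (Real.exp (-(a * x)) * -a)) x := by
    have h1 : HasDerivAt (fun x : ℝ => -(a * x)) (-a) x := by
      simpa using (((hasDerivAt_id x).const_mul a).fun_neg)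
    exact h1.exp.const_mul a
  have := hnum.div (hasDerivAt_inner (a := a) (x := x)) (ne_of_gt h)
  refine HasDerivAt.congr_deriv (this) ?_
  symm
  unfold hdd
  field_simp
  ring

lemma hasDerivAt_Ff {a v : ℝ} (ha : 0 < a) (hv : v ∈ Set.Ioo (-(1:ℝ)/2) (1/2)) :
    HasDerivAt (Ff a) (Fd a v) v := by
  obtain ⟨hv1, hv2⟩ := hv
  have hsq : 0 < 1 - v ^ 2 := by nlinarith
  have hp := hasDerivAt_pf hsq
  have hs := hasDerivAt_sf (by linarith) (by linarith)
  have hppos := pf_pos hsq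
  have hspos := sf_pos (v := v) (by linarith) (by linarith)
  have hA : 0 < 1 - Real.exp (-(a * pf v)) := one_sub_exp_pos ha hppos
  have hB : 0 < 1 - Real.exp (-(a * sf v)) := one_sub_exp_pos ha hspos
  have hhp : HasDerivAt (fun v => hf a (pf v)) (hd a (pf v) * pd v) v :=
    (hasDerivAt_hf hA).comp v hp
  have hhs : HasDerivAt (fun v => hf a (sf v)) (hd a (sf v) * sd v) v :=
    (hasDerivAt_hf hB).comp v hs
  have hmain := (hp.mul (hhp.sub hhs)).const_mul ((Real.exp a - 1) / a)
  exact hmain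

lemma pf_zero : pf 0 = 1 := by simp [pf]
lemma sf_zero : sf 0 = 1 := by norm_num [sf]
lemma pd_zero : pd 0 = 0 := by simp [pd]
lemma sd_zero : sd 0 = -1 := by simp [sd, sf_zero]

lemma hasDerivAt_pf_zero : HasDerivAt pf 0 0 := by
  have := hasDerivAt_pf (v := 0) (by norm_num)
  simpa [pd_zero] using this

lemma hasDerivAt_sf_zero : HasDerivAt sf (-1) 0 := by
  have := hasDerivAt_sf (v := 0) (by norm_num) (by norm_num)
  simpa [sd_zero] using this

lemma hasDerivAt_pd_zero : HasDerivAt pd (-1) 0 := by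
  have hnum : HasDerivAt (fun v : ℝ => -v) (-1) 0 := by
    simpa using (hasDerivAt_id (0:ℝ)).fun_neg
  have := hnum.div hasDerivAt_pf_zero (by rw [pf_zero]; norm_num)
  have heq : (-1 * pf 0 - -0 * 0) / pf 0 ^ 2 = -1 := by rw [pf_zero]; norm_num
  rw [heq] at this
  exact this

lemma hasDerivAt_sd_zero : HasDerivAt sd 1 0 := by
  have hden : HasDerivAt (fun v : ℝ => (1 + v) ^ 2 * sf v)
      ((2 * (1 + 0) ^ 1 * 1) * sf 0 + (1 + 0) ^ 2 * (-1)) 0 := by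
    have h1 : HasDerivAt (fun v : ℝ => 1 + v) 1 0 := by
      simpa using (hasDerivAt_id (0:ℝ)).const_add 1
    exact (h1.pow 2).mul hasDerivAt_sf_zero
  have hden' : HasDerivAt (fun v : ℝ => (1 + v) ^ 2 * sf v) 1 0 := by
    refine HasDerivAt.congr_deriv (hden) ?_
    symm
    rw [sf_zero]; norm_num
  have hnum : HasDerivAt (fun _ : ℝ => (-1 : ℝ)) 0 0 := hasDerivAt_const 0 (-1)
  have hne : (1 + (0:ℝ)) ^ 2 * sf 0 ≠ 0 := by rw [sf_zero]; norm_num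
  have := hnum.div hden' hne
  have heq : (0 * ((1 + (0:ℝ)) ^ 2 * sf 0) - -1 * 1) / ((1 + (0:ℝ)) ^ 2 * sf 0) ^ 2 = 1 := by
    rw [sf_zero]; norm_num
  rw [heq] at this
  exact this

lemma hasDerivAt_Fd_zero {a : ℝ} (ha : 0 < a) :
    HasDerivAt (Fd a) (a * Real.exp a / (Real.exp a - 1) - 2) 0 := by
  have hea : 0 < 1 - Real.exp (-(a * 1)) := one_sub_exp_pos ha one_pos
  have hhd_p : HasDerivAt (hd a) (hdd a 1) (pf 0) := by
    rw [pf_zero]; exact hasDerivAt_hd hea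
  have hhd_s : HasDerivAt (hd a) (hdd a 1) (sf 0) := by
    rw [sf_zero]; exact hasDerivAt_hd hea
  have hhf_p : HasDerivAt (hf a) (hd a 1) (pf 0) := by
    rw [pf_zero]; exact hasDerivAt_hf hea
  have hhf_s : HasDerivAt (hf a) (hd a 1) (sf 0) := by
    rw [sf_zero]; exact hasDerivAt_hf hea
  have hP : HasDerivAt (fun v => hd a (pf v)) (hdd a 1 * 0) 0 :=
    hhd_p.comp 0 hasDerivAt_pf_zero
  have hS : HasDerivAt (fun v => hd a (sf v)) (hdd a 1 * -1) 0 :=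
    hhd_s.comp 0 hasDerivAt_sf_zero
  have hAp : HasDerivAt (fun v => hf a (pf v)) (hd a 1 * 0) 0 :=
    hhf_p.comp 0 hasDerivAt_pf_zero
  have hAs : HasDerivAt (fun v => hf a (sf v)) (hd a 1 * -1) 0 :=
    hhf_s.comp 0 hasDerivAt_sf_zero
  have hfirst := hasDerivAt_pd_zero.mul (hAp.sub hAs)
  have hinner := (hP.mul hasDerivAt_pd_zero).sub (hS.mul hasDerivAt_sd_zero)
  have hsecond := hasDerivAt_pf_zero.mul hinner
  have htotal := (hfirst.add hsecond).const_mul ((Real.exp a - 1) / a)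
  have hFdfun : Fd a = fun v =>
      ((Real.exp a - 1) / a) *
        (pd v * (hf a (pf v) - hf a (sf v)) +
          pf v * (hd a (pf v) * pd v - hd a (sf v) * sd v)) := rfl
  rw [hFdfun]
  refine HasDerivAt.congr_deriv (htotal) ?_
  symm
  have ha' : a ≠ 0 := ne_of_gt ha
  have he1 : Real.exp a - 1 ≠ 0 := by
    have : (1:ℝ) < Real.exp a := by
      calc (1:ℝ) = Real.exp 0 := by simp
      _ < Real.exp a := Real.exp_lt_exp.mpr ha
    linarith
  have hne : 1 - Real.exp (-(a * 1)) ≠ 0 := ne_of_gt hea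
  rw [pf_zero, sf_zero, pd_zero, sd_zero]
  simp only [Pi.sub_apply, pf_zero, sf_zero, sub_self]
  unfold hd hdd
  rw [Real.exp_neg]
  have hex : Real.exp (a * 1) = Real.exp a := by rw [mul_one]
  rw [hex]
  have hne' : 1 - (Real.exp a)⁻¹ ≠ 0 := by
    rw [Real.exp_neg, hex] at hne; exact hne
  have hepos : Real.exp a ≠ 0 := (Real.exp_pos a).ne'
  field_simp
  ring

lemma Ff_zero {a : ℝ} : Ff a 0 = 0 := by simp [Ff, pf_zero, sf_zero]

lemma Fd_zero {a : ℝ} (ha : 0 < a) : Fd a 0 = 1 := by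
  have hea : 0 < 1 - Real.exp (-(a * 1)) := one_sub_exp_pos ha one_pos
  have ha' : a ≠ 0 := ne_of_gt ha
  have hepos : Real.exp a ≠ 0 := (Real.exp_pos a).ne'
  have he1 : Real.exp a - 1 ≠ 0 := by
    have : (1:ℝ) < Real.exp a := by
      calc (1:ℝ) = Real.exp 0 := by simp
      _ < Real.exp a := Real.exp_lt_exp.mpr ha
    linarith
  have hne : 1 - Real.exp (-(a * 1)) ≠ 0 := ne_of_gt hea
  have hne' : 1 - (Real.exp a)⁻¹ ≠ 0 := by
    rw [Real.exp_neg, mul_one] at hne; exact hne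
  unfold Fd hd
  rw [pf_zero, sf_zero, pd_zero, sd_zero, mul_one, Real.exp_neg]
  field_simp
  ring

lemma Qfun_eq {a v : ℝ} (ha : 0 < a) (hv : v ∈ Set.Ioo (-(1:ℝ)/2) (1/2)) (hv0 : v ≠ 0) :
    Qfun a v = Ff a v / v := by
  obtain ⟨hv1, hv2⟩ := hv
  have hsq : 0 < 1 - v ^ 2 := by nlinarith
  have hppos := pf_pos hsq
  have hspos := sf_pos (v := v) (by linarith) (by linarith)
  have hA : 0 < 1 - Real.exp (-(a * pf v)) := one_sub_exp_pos ha hppos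
  have hB : 0 < 1 - Real.exp (-(a * sf v)) := one_sub_exp_pos ha hspos
  have ha' : a ≠ 0 := ne_of_gt ha
  unfold Qfun Ff hf
  rw [if_neg hv0]
  show Real.sqrt (1 - v ^ 2) * (Real.exp a - 1) / (v * a) *
      Real.log ((1 - Real.exp (-(a * pf v))) / (1 - Real.exp (-(a * sf v)))) = _
  rw [Real.log_div (ne_of_gt hA) (ne_of_gt hB)]
  show pf v * (Real.exp a - 1) / (v * a) * _ = _
  field_simp

open Asymptotics in
lemma key_taylor (f f' : ℝ → ℝ) (c M : ℝ) (U : Set ℝ) (hU : U ∈ nhds (0:ℝ))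
    (hder : ∀ x ∈ U, HasDerivAt f (f' x) x)
    (hf' : HasDerivAt f' M 0) (hf0 : f 0 = 0) (hc : f' 0 = c)
    (q : ℝ → ℝ) (hq0 : q 0 = c) (hq : ∀ v ∈ U, v ≠ 0 → q v = f v / v) :
    HasDerivAt q (M / 2) 0 := by
  rw [hasDerivAt_iff_isLittleO, isLittleO_iff]
  intro ε hε
  have h1 : ∀ᶠ x in nhds (0:ℝ), ‖f' x - c - M * x‖ ≤ ε * ‖x‖ := by
    have h2 := isLittleO_iff.mp (hasDerivAt_iff_isLittleO.mp hf') hε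
    filter_upwards [h2] with x hx
    simpa [hc, mul_comm] using hx
  rw [Metric.eventually_nhds_iff] at h1
  obtain ⟨δ1, hδ1, hball⟩ := h1
  obtain ⟨δ2, hδ2, hball2⟩ := Metric.mem_nhds_iff.mp hU
  rw [Metric.eventually_nhds_iff]
  refine ⟨min δ1 δ2, lt_min hδ1 hδ2, ?_⟩
  intro v hvδ
  rcases eq_or_ne v 0 with hv0 | hv0
  · simp [hv0, hq0]
  · rw [Real.dist_eq, sub_zero] at hvδ
    have hvδ1 : |v| < δ1 := lt_of_lt_of_le hvδ (min_le_left _ _)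
    have hvδ2 : |v| < δ2 := lt_of_lt_of_le hvδ (min_le_right _ _)
    have hvU : v ∈ U := hball2 (by rw [Metric.mem_ball, Real.dist_eq, sub_zero]; exact hvδ2)
    set g : ℝ → ℝ := fun x => f x - c * x - (M / 2) * x ^ 2 with hgdef
    set g' : ℝ → ℝ := fun x => f' x - c - M * x with hgdef'
    have habs : ∀ x ∈ Set.uIcc 0 v, |x| ≤ |v| := by
      intro x hx
      rcases Set.mem_uIcc.mp hx with ⟨h1, h2⟩ | ⟨h1, h2⟩
      · rw [abs_of_nonneg h1]; exact h2.trans (le_abs_self v)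
      · rw [abs_of_nonpos h2]; linarith [neg_abs_le v]
    have hgder : ∀ x ∈ Set.uIcc 0 v,
        HasDerivWithinAt g (g' x) (Set.uIcc 0 v) x := by
      intro x hx
      have hxU : x ∈ U := by
        apply hball2
        rw [Metric.mem_ball, Real.dist_eq, sub_zero]
        exact lt_of_le_of_lt (habs x hx) hvδ2
      have hq2 : HasDerivAt (fun x : ℝ => (M / 2) * x ^ 2) (M * x) x := by
        have := (hasDerivAt_pow 2 x).const_mul (M / 2)
        refine HasDerivAt.congr_deriv (this) ?_
        symm
        push_cast
        ring
      have hlin : HasDerivAt (fun x : ℝ => c * x) c x := by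
        simpa using (hasDerivAt_id x).const_mul c
      exact (((hder x hxU).sub hlin).sub hq2).hasDerivWithinAt
    have hbound : ∀ x ∈ Set.uIcc 0 v, ‖g' x‖ ≤ ε * |v| := by
      intro x hx
      have hxd : dist x 0 < δ1 := by
        rw [Real.dist_eq, sub_zero]
        exact lt_of_le_of_lt (habs x hx) hvδ1
      calc ‖g' x‖ ≤ ε * ‖x‖ := hball hxd
        _ ≤ ε * |v| := by
          apply mul_le_mul_of_nonneg_left _ (le_of_lt hε)
          simpa using habs x hx
    have hmvt := (convex_uIcc (0:ℝ) v).norm_image_sub_le_of_norm_hasDerivWithin_le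
      hgder hbound Set.left_mem_uIcc Set.right_mem_uIcc
    have hg0 : g 0 = 0 := by simp [hgdef, hf0]
    rw [hg0, sub_zero, sub_zero] at hmvt
    have key2 : q v - q 0 - (v - 0) • (M / 2) = (f v - c * v - (M / 2) * v ^ 2) / v := by
      rw [hq v hvU hv0, hq0]
      field_simp
      ring
    rw [key2]
    have hvpos : (0:ℝ) < |v| := abs_pos.mpr hv0
    rw [Real.norm_eq_abs, abs_div]
    rw [div_le_iff₀ hvpos]
    have : ‖g v‖ = |f v - c * v - (M / 2) * v ^ 2| := rfl
    calc |f v - c * v - (M / 2) * v ^ 2| = ‖g v‖ := rfl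
      _ ≤ ε * |v| * ‖v‖ := hmvt
      _ = ε * ‖v - 0‖ * |v| := by rw [sub_zero, Real.norm_eq_abs]
  
/-- For `a > 0`, the quotient `Q_a` is differentiable at `v = 0` with
derivative `Q_a′(0) = (e^a(a − 2) + 2)/(2(e^a − 1))`; in particular `Q_a′(0) = 0` iff
`e^a(a − 2) + 2 = 0`. -/
theorem stmt13 (a : ℝ) (ha : 0 < a) :
    HasDerivAt (Qfun a) ((Real.exp a * (a - 2) + 2) / (2 * (Real.exp a - 1))) 0 ∧
    (deriv (Qfun a) 0 = 0 ↔ Real.exp a * (a - 2) + 2 = 0) := by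
  have he1 : Real.exp a - 1 ≠ 0 := by
    have : (1:ℝ) < Real.exp a := by
      calc (1:ℝ) = Real.exp 0 := by simp
      _ < Real.exp a := Real.exp_lt_exp.mpr ha
    linarith
  have hU : Set.Ioo (-(1:ℝ)/2) (1/2) ∈ nhds (0:ℝ) :=
    Ioo_mem_nhds (by norm_num) (by norm_num)
  have hmain : HasDerivAt (Qfun a) ((a * Real.exp a / (Real.exp a - 1) - 2) / 2) 0 :=
    key_taylor (Ff a) (Fd a) 1 (a * Real.exp a / (Real.exp a - 1) - 2) _ hU
      (fun x hx => hasDerivAt_Ff ha hx) (hasDerivAt_Fd_zero ha) Ff_zero (Fd_zero ha)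
      (Qfun a) (by simp [Qfun]) (fun v hv h0 => Qfun_eq ha hv h0)
  have hL : (a * Real.exp a / (Real.exp a - 1) - 2) / 2
      = (Real.exp a * (a - 2) + 2) / (2 * (Real.exp a - 1)) := by
    field_simp
    ring
  rw [hL] at hmain
  refine ⟨hmain, ?_⟩
  rw [hmain.deriv]
  rw [div_eq_zero_iff]
  exact or_iff_left (mul_ne_zero two_ne_zero he1)
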